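/- Let α > 0 and M > 0. There exists a constant C = C(M) > 0 such that the following holds: if X = {(λ, m_λ)}_{λ∈Λ} is an interpolating divisor for F^∞_α with interpolation constant M_X ≤ M, then the discs D(λ, √(m_λ/α) − C), taken over those λ ∈ Λ with m_λ > αC², are pairwise disjoint. -/

import Mathlib

open MeasureTheory Metric Set
open scoped ENNReal NNReal

noncomputable section

/-- Membership in the Fock space `F^∞_α`: entire functions with
`sup_z |f(z)| e^{−(α/2)|z|²} < ∞`. -/
def MemFInf (α : ℝ) (f : ℂ → ℂ) : Prop :=
  Differentiable ℂ f ∧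
    ∃ C : ℝ, ∀ z : ℂ, ‖f z‖ * Real.exp (-(α / 2) * ‖z‖ ^ 2) ≤ C

/-- The norm in `F^∞_α`. -/
def FInfNorm (α : ℝ) (f : ℂ → ℂ) : ℝ :=
  ⨆ z : ℂ, ‖f z‖ * Real.exp (-(α / 2) * ‖z‖ ^ 2)

/-- Membership in `N^∞_{λ,n}`: the functions of `F^∞_α` vanishing at `λ` to order `n`. -/
def MemNInf (α : ℝ) (lam : ℂ) (n : ℕ) (f : ℂ → ℂ) : Prop :=
  MemFInf α f ∧ ∀ k < n, iteratedDeriv k f lam = 0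

/-- The quotient norm `‖f‖_{F^∞_α / N^∞_{λ,n}} = inf {‖f − g‖ : g ∈ N^∞_{λ,n}}`. -/
def quotInf (α : ℝ) (lam : ℂ) (n : ℕ) (f : ℂ → ℂ) : ℝ :=
  sInf {c : ℝ | ∃ g : ℂ → ℂ, MemNInf α lam n g ∧ FInfNorm α (fun z => f z - g z) = c}

/-- `X = (Λ, m)` is a sampling divisor for `F^∞_α`. -/
def SamplingFInf (α : ℝ) (Λ : Set ℂ) (m : ℂ → ℕ) : Prop :=
  ∃ L : ℝ, 0 < L ∧ ∀ f : ℂ → ℂ, MemFInf α f →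
    FInfNorm α f ≤ L * ⨆ lam : Λ, quotInf α (lam : ℂ) (m (lam : ℂ)) f

/-- `X = (Λ, m)` is an interpolating divisor for `F^∞_α`: for every family
`(f_λ)` with uniformly bounded quotient norms there is `f ∈ F^∞_α` with
`f − f_λ ∈ N^∞_λ` for all `λ ∈ Λ`. -/
def InterpolatingFInf (α : ℝ) (Λ : Set ℂ) (m : ℂ → ℕ) : Prop :=
  ∀ F : ℂ → ℂ → ℂ, (∀ lam ∈ Λ, MemFInf α (F lam)) →
    (∃ B : ℝ, ∀ lam ∈ Λ, quotInf α lam (m lam) (F lam) ≤ B) →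
    ∃ f : ℂ → ℂ, MemFInf α f ∧
      ∀ lam ∈ Λ, MemNInf α lam (m lam) (fun z => f z - F lam z)

/-- `X = (Λ, m)` is an interpolating divisor for `F^∞_α` with interpolation constant
at most `M`: for every family `(f_λ)` with quotient norms bounded by `B` there is an
interpolating `f ∈ F^∞_α` with `‖f‖ ≤ M B`. -/
def InterpolatingFInfConst (α M : ℝ) (Λ : Set ℂ) (m : ℂ → ℕ) : Prop :=
  ∀ F : ℂ → ℂ → ℂ, (∀ lam ∈ Λ, MemFInf α (F lam)) →
    ∀ B : ℝ, (∀ lam ∈ Λ, quotInf α lam (m lam) (F lam) ≤ B) →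
    ∃ f : ℂ → ℂ, MemFInf α f ∧
      (∀ lam ∈ Λ, MemNInf α lam (m lam) (fun z => f z - F lam z)) ∧
      FInfNorm α f ≤ M * B



lemma differentiable_dslope_entire {f : ℂ → ℂ} (hf : Differentiable ℂ f) (a : ℂ) :
    Differentiable ℂ (dslope f a) := by
  intro b
  rcases eq_or_ne b a with rfl | hba
  · obtain ⟨p, hp⟩ := hf.analyticAt b
    exact hp.has_fpower_series_dslope_fslope.analyticAt.differentiableAt
  · exact (differentiableAt_dslope_of_ne hba).mpr (hf b)

lemma exists_factor {f : ℂ → ℂ} (hf : Differentiable ℂ f) (a : ℂ) (n : ℕ)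
    (hv : ∀ k < n, iteratedDeriv k f a = 0) :
    ∃ g : ℂ → ℂ, Differentiable ℂ g ∧ ∀ z, f z = (z - a) ^ n * g z := by
  obtain ⟨p, hp⟩ := hf.analyticAt a
  have hdiff : ∀ i : ℕ, Differentiable ℂ ((Function.swap dslope a)^[i] f) := by
    intro i; induction i with
    | zero => simpa using hf
    | succ i ih =>
      rw [Function.iterate_succ_apply']
      exact differentiable_dslope_entire ih a
  have hcoeff : ∀ i : ℕ, (Nat.factorial i) • p.coeff i = iteratedDeriv i f a := by
    intro i
    obtain ⟨r, hr⟩ := hp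
    have h := hr.factorial_smul (1 : ℂ) i
    have hc : p.coeff i = p i (fun _ => 1) := rfl
    rw [iteratedDeriv_eq_iteratedFDeriv, hc]
    exact h
  have hval : ∀ i, i < n → ((Function.swap dslope a)^[i] f) a = 0 := by
    intro i hi
    have h1 := (hp.has_fpower_series_iterate_dslope_fslope i).coeff_zero (fun _ => (1 : ℂ))
    have h2 : (FormalMultilinearSeries.fslope^[i] p).coeff 0 = p.coeff i := by
      simpa using FormalMultilinearSeries.coeff_iterate_fslope p i 0
    have h3 : p.coeff i = 0 := by
      have h4 := hcoeff i
      rw [hv i hi] at h4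
      rcases smul_eq_zero.mp h4 with h | h
      · exact absurd h (Nat.factorial_ne_zero i)
      · exact h
    calc ((Function.swap dslope a)^[i] f) a
        = (FormalMultilinearSeries.fslope^[i] p).coeff 0 := by
          rw [FormalMultilinearSeries.coeff]; exact h1.symm
      _ = p.coeff i := h2
      _ = 0 := h3
  have heq : ∀ i, i ≤ n → ∀ z, f z = (z - a) ^ i * ((Function.swap dslope a)^[i] f) z := by
    intro i; induction i with
    | zero => intro _ z; simp
    | succ i ih =>
      intro hi z
      have h5 := ih (le_of_lt (Nat.lt_of_succ_le hi)) z
      have h6 : ((Function.swap dslope a)^[i] f) z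
          = (z - a) * ((Function.swap dslope a)^[i + 1] f) z := by
        have hs := sub_smul_dslope ((Function.swap dslope a)^[i] f) a z
        rw [hval i (Nat.lt_of_succ_le hi), sub_zero] at hs
        rw [Function.iterate_succ_apply']
        simpa [smul_eq_mul] using hs.symm
      rw [h5, h6]; ring
  exact ⟨_, hdiff n, heq n le_rfl⟩

lemma exp_weight_id (α : ℝ) (p z : ℂ) :
    Real.exp (α / 2 * ‖z‖ ^ 2) *
      ‖Complex.exp ((α : ℂ) * (-(starRingEnd ℂ) p * (z - p))
        - ((α * ‖p‖ ^ 2 / 2 : ℝ) : ℂ))‖ =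
    Real.exp (α / 2 * ‖z - p‖ ^ 2) := by
  rw [Complex.norm_exp, ← Real.exp_add]
  congr 1
  simp only [Complex.sub_re, Complex.mul_re, Complex.mul_im, Complex.ofReal_re,
    Complex.ofReal_im, Complex.neg_re, Complex.neg_im, Complex.conj_re, Complex.conj_im,
    Complex.sub_im, Complex.sq_norm, Complex.normSq_apply]
  ring

lemma fock_suppress {α N : ℝ} (hα : 0 < α) {F : ℂ → ℂ} (hF : Differentiable ℂ F)
    (hN : 0 ≤ N)
    (hFb : ∀ z, ‖F z‖ * Real.exp (-(α / 2) * ‖z‖ ^ 2) ≤ N)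
    {p : ℂ} {n : ℕ} (hn : 0 < n) (hv : ∀ k < n, iteratedDeriv k F p = 0)
    {x : ℂ} (hx : ‖x - p‖ ≤ Real.sqrt ((n : ℝ) / α)) :
    ‖F x‖ * Real.exp (-(α / 2) * ‖x‖ ^ 2)
      ≤ N * Real.exp (-(α / 2) * (Real.sqrt ((n : ℝ) / α) - ‖x - p‖) ^ 2) := by
  set s : ℝ := Real.sqrt ((n : ℝ) / α) with hs_def
  have hnpos : (0 : ℝ) < (n : ℝ) := by exact_mod_cast hn
  have hs : 0 < s := Real.sqrt_pos.mpr (by positivity)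
  have hs2 : s ^ 2 = (n : ℝ) / α := Real.sq_sqrt (by positivity)
  have hnα : (n : ℝ) = α * s ^ 2 := by rw [hs2]; field_simp
  obtain ⟨g, hg, hfg⟩ := exists_factor hF p n hv
  set E : ℂ → ℂ := fun z => Complex.exp ((α : ℂ) * (-(starRingEnd ℂ) p * (z - p))
      - ((α * ‖p‖ ^ 2 / 2 : ℝ) : ℂ)) with hE_def
  have hEdiff : Differentiable ℂ E := by
    apply Differentiable.cexp
    apply Differentiable.sub_const
    exact ((differentiable_id.sub_const p).const_mul _).const_mul _
  set G : ℂ → ℂ := fun z => g z * E z with hG_def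
  have hGdiff : Differentiable ℂ G := hg.mul hEdiff
  have idE : ∀ z : ℂ, Real.exp (α / 2 * ‖z‖ ^ 2) * ‖E z‖
      = Real.exp (α / 2 * ‖z - p‖ ^ 2) := fun z => exp_weight_id α p z
  have hFE : ∀ z : ℂ, ‖F z‖ * ‖E z‖
      ≤ N * Real.exp (α / 2 * ‖z - p‖ ^ 2) := by
    intro z
    have hcancel : Real.exp (-(α / 2) * ‖z‖ ^ 2)
        * Real.exp (α / 2 * ‖z‖ ^ 2) = 1 := by
      rw [← Real.exp_add, (by ring : -(α / 2) * ‖z‖ ^ 2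
        + α / 2 * ‖z‖ ^ 2 = 0), Real.exp_zero]
    calc ‖F z‖ * ‖E z‖
        = (‖F z‖ * Real.exp (-(α / 2) * ‖z‖ ^ 2))
          * (Real.exp (α / 2 * ‖z‖ ^ 2) * ‖E z‖) := by
          calc ‖F z‖ * ‖E z‖
              = ‖F z‖ * (Real.exp (-(α / 2) * ‖z‖ ^ 2)
                * Real.exp (α / 2 * ‖z‖ ^ 2)) * ‖E z‖ := by
                rw [hcancel, mul_one]
            _ = _ := by ring
      _ = (‖F z‖ * Real.exp (-(α / 2) * ‖z‖ ^ 2))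
          * Real.exp (α / 2 * ‖z - p‖ ^ 2) := by rw [idE z]
      _ ≤ N * Real.exp (α / 2 * ‖z - p‖ ^ 2) :=
          mul_le_mul_of_nonneg_right (hFb z) (Real.exp_pos _).le
  have hGsphere : ∀ z ∈ sphere p s, ‖G z‖ ≤ N * Real.exp (α / 2 * s ^ 2) / s ^ n := by
    intro z hz
    have hzp : ‖z - p‖ = s := by
      rw [mem_sphere_iff_norm] at hz
      simpa using hz
    have h2 := hFE z
    rw [hfg z, norm_mul, norm_pow, hzp] at h2
    rw [le_div_iff₀ (by positivity)]
    calc ‖G z‖ * s ^ n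
        = s ^ n * ‖g z‖ * ‖E z‖ := by
          rw [hG_def]; simp only [norm_mul]; ring
      _ ≤ N * Real.exp (α / 2 * s ^ 2) := h2
  have hGball : ‖G x‖ ≤ N * Real.exp (α / 2 * s ^ 2) / s ^ n := by
    have h := Complex.norm_le_of_forall_mem_frontier_norm_le
      (isBounded_ball (x := p) (r := s)) hGdiff.diffContOnCl
      (C := N * Real.exp (α / 2 * s ^ 2) / s ^ n) ?_ (z := x) ?_
    · simpa using h
    · intro z hz
      rw [frontier_ball p hs.ne'] at hz
      simpa using hGsphere z hz
    · rw [closure_ball p hs.ne']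
      rw [mem_closedBall, Complex.dist_eq]
      exact hx
  rcases eq_or_ne x p with rfl | hxp
  · have hF0 : F x = 0 := by
      have := hv 0 hn
      simpa [iteratedDeriv_zero] using this
    rw [hF0]
    simp only [norm_zero, zero_mul]
    exact mul_nonneg hN (Real.exp_pos _).le
  · set u : ℝ := ‖x - p‖ with hu_def
    have hu : 0 < u := norm_pos_iff.mpr (sub_ne_zero.mpr hxp)
    have hExpos : (0 : ℝ) < ‖E x‖ := norm_pos_iff.mpr (Complex.exp_ne_zero _)
    have hFx : ‖F x‖ * ‖E x‖ = u ^ n * ‖G x‖ := by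
      have hme : F x * E x = (x - p) ^ n * G x := by rw [hfg x, hG_def]; ring
      calc ‖F x‖ * ‖E x‖ = ‖F x * E x‖ := (norm_mul _ _).symm
        _ = ‖(x - p) ^ n * G x‖ := by rw [hme]
        _ = u ^ n * ‖G x‖ := by rw [norm_mul, norm_pow]
    have hEA : Real.exp (α / 2 * ‖x‖ ^ 2) * ‖E x‖
        = Real.exp (α / 2 * u ^ 2) := idE x
    have hA : ‖F x‖ * Real.exp (-(α / 2) * ‖x‖ ^ 2)
        = u ^ n * ‖G x‖ * Real.exp (-(α / 2) * u ^ 2) := by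
      have hpos : (0 : ℝ) < Real.exp (α / 2 * ‖x‖ ^ 2) * ‖E x‖ :=
        mul_pos (Real.exp_pos _) hExpos
      apply mul_right_cancel₀ (ne_of_gt hpos)
      have hc1 : Real.exp (-(α / 2) * ‖x‖ ^ 2)
          * Real.exp (α / 2 * ‖x‖ ^ 2) = 1 := by
        rw [← Real.exp_add, (by ring : -(α / 2) * ‖x‖ ^ 2
          + α / 2 * ‖x‖ ^ 2 = 0), Real.exp_zero]
      have hc2 : Real.exp (-(α / 2) * u ^ 2) * Real.exp (α / 2 * u ^ 2) = 1 := by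
        rw [← Real.exp_add, (by ring : -(α / 2) * u ^ 2 + α / 2 * u ^ 2 = 0), Real.exp_zero]
      calc (‖F x‖ * Real.exp (-(α / 2) * ‖x‖ ^ 2))
            * (Real.exp (α / 2 * ‖x‖ ^ 2) * ‖E x‖)
          = (‖F x‖ * ‖E x‖)
            * (Real.exp (-(α / 2) * ‖x‖ ^ 2)
              * Real.exp (α / 2 * ‖x‖ ^ 2)) := by ring
        _ = u ^ n * ‖G x‖ := by rw [hc1, hFx, mul_one]
        _ = (u ^ n * ‖G x‖)
            * (Real.exp (-(α / 2) * u ^ 2) * Real.exp (α / 2 * u ^ 2)) := by rw [hc2, mul_one]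
        _ = (u ^ n * ‖G x‖ * Real.exp (-(α / 2) * u ^ 2))
            * Real.exp (α / 2 * u ^ 2) := by ring
        _ = (u ^ n * ‖G x‖ * Real.exp (-(α / 2) * u ^ 2))
            * (Real.exp (α / 2 * ‖x‖ ^ 2) * ‖E x‖) := by rw [hEA]
    rw [hA]
    have hstep : u ^ n * Real.exp (-(α / 2) * u ^ 2) * Real.exp (α / 2 * s ^ 2) / s ^ n
        ≤ Real.exp (-(α / 2) * (s - u) ^ 2) := by
      have hlog : Real.log (u / s) ≤ u / s - 1 := Real.log_le_sub_one_of_pos (by positivity)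
      have h7 : (n : ℝ) * (Real.log u - Real.log s) ≤ (n : ℝ) * (u / s - 1) := by
        apply mul_le_mul_of_nonneg_left _ (Nat.cast_nonneg n)
        rw [← Real.log_div (ne_of_gt hu) (ne_of_gt hs)]
        exact hlog
      have h8 : (n : ℝ) * (u / s - 1) = α * s * u - α * s ^ 2 := by
        rw [hnα]; field_simp
      have hmain : (n : ℝ) * Real.log u - α / 2 * u ^ 2 + α / 2 * s ^ 2
          - (n : ℝ) * Real.log s ≤ -(α / 2) * (s - u) ^ 2 := by nlinarith [h7, h8]
      have hLHS : u ^ n * Real.exp (-(α / 2) * u ^ 2) * Real.exp (α / 2 * s ^ 2) / s ^ n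
          = Real.exp ((n : ℝ) * Real.log u - α / 2 * u ^ 2 + α / 2 * s ^ 2
            - (n : ℝ) * Real.log s) := by
        rw [← Real.exp_log (pow_pos hu n), ← Real.exp_log (pow_pos hs n),
          Real.log_pow, Real.log_pow, ← Real.exp_add, ← Real.exp_add, ← Real.exp_sub]
        congr 1
        push_cast
        ring
      rw [hLHS]
      exact Real.exp_le_exp.mpr hmain
    calc u ^ n * ‖G x‖ * Real.exp (-(α / 2) * u ^ 2)
        ≤ u ^ n * (N * Real.exp (α / 2 * s ^ 2) / s ^ n) * Real.exp (-(α / 2) * u ^ 2) := by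
          apply mul_le_mul_of_nonneg_right _ (Real.exp_pos _).le
          exact mul_le_mul_of_nonneg_left hGball (by positivity)
      _ = N * (u ^ n * Real.exp (-(α / 2) * u ^ 2) * Real.exp (α / 2 * s ^ 2) / s ^ n) := by
          ring
      _ ≤ N * Real.exp (-(α / 2) * (s - u) ^ 2) := mul_le_mul_of_nonneg_left hstep hN



lemma FInfNorm_nonneg (α : ℝ) (f : ℂ → ℂ) : 0 ≤ FInfNorm α f :=
  Real.iSup_nonneg fun z => by positivity

lemma FInfNorm_le {α : ℝ} {f : ℂ → ℂ} {c : ℝ} (hc : 0 ≤ c)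
    (h : ∀ z, ‖f z‖ * Real.exp (-(α / 2) * ‖z‖ ^ 2) ≤ c) :
    FInfNorm α f ≤ c := Real.iSup_le h hc

lemma le_FInfNorm {α : ℝ} {f : ℂ → ℂ} (hf : MemFInf α f) (z : ℂ) :
    ‖f z‖ * Real.exp (-(α / 2) * ‖z‖ ^ 2) ≤ FInfNorm α f := by
  obtain ⟨c, hc⟩ := hf.2
  exact le_ciSup ⟨c, by rintro _ ⟨w, rfl⟩; exact hc w⟩ z

lemma iteratedDeriv_zero_fun (k : ℕ) : iteratedDeriv k (fun _ : ℂ => (0 : ℂ)) = fun _ => 0 := by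
  induction k with
  | zero => rfl
  | succ k ih => rw [iteratedDeriv_succ, ih]; funext z; simp

lemma memFInf_zero (α : ℝ) : MemFInf α (fun _ => (0 : ℂ)) :=
  ⟨differentiable_const 0, 0, fun z => by simp⟩

lemma memNInf_zero (α : ℝ) (lam : ℂ) (n : ℕ) : MemNInf α lam n (fun _ => 0) :=
  ⟨memFInf_zero α, fun k _ => by rw [iteratedDeriv_zero_fun]⟩

lemma FInfNorm_zero (α : ℝ) : FInfNorm α (fun _ => (0 : ℂ)) = 0 := by
  have : (fun z : ℂ => ‖(fun _ : ℂ => (0:ℂ)) z‖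
      * Real.exp (-(α / 2) * ‖z‖ ^ 2)) = fun _ => (0:ℝ) := by
    funext z; simp
  rw [FInfNorm, this]
  exact ciSup_const

lemma quotInf_le_norm (α : ℝ) (lam : ℂ) (n : ℕ) (f : ℂ → ℂ) :
    quotInf α lam n f ≤ FInfNorm α f := by
  apply csInf_le
  · refine ⟨0, ?_⟩
    rintro c ⟨g, hg, rfl⟩
    exact FInfNorm_nonneg α _
  · exact ⟨fun _ => 0, memNInf_zero α lam n, by simp only [sub_zero]⟩

lemma gx_weight (α : ℝ) (x z : ℂ) :
    ‖Complex.exp ((α : ℂ) * ((starRingEnd ℂ) x) * z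
        - ((α * ‖x‖ ^ 2 / 2 : ℝ) : ℂ))‖
      * Real.exp (-(α / 2) * ‖z‖ ^ 2)
    = Real.exp (-(α / 2) * ‖z - x‖ ^ 2) := by
  rw [Complex.norm_exp, ← Real.exp_add]
  congr 1
  simp only [Complex.sub_re, Complex.mul_re, Complex.mul_im, Complex.ofReal_re,
    Complex.ofReal_im, Complex.conj_re, Complex.conj_im, Complex.sub_im,
    Complex.sq_norm, Complex.normSq_apply]
  ring


/-- If `X` is an interpolating divisor for `F^∞_α` with interpolation constant at most
`M`, then for some `C = C(M) > 0` the discs `D(λ, √(m_λ/α) − C)`, over those `λ ∈ Λ`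
with `m_λ > αC²`, are pairwise disjoint. -/
theorem stmt8 (α M : ℝ) (hα : 0 < α) (hM : 0 < M) :
    ∃ C : ℝ, 0 < C ∧ ∀ (Λ : Set ℂ) (m : ℂ → ℕ),
      Λ.Countable → (∀ lam ∈ Λ, 1 ≤ m lam) →
      InterpolatingFInfConst α M Λ m →
      ({l ∈ Λ | α * C ^ 2 < (m l : ℝ)}).PairwiseDisjoint
        (fun lam => ball lam (Real.sqrt ((m lam : ℝ) / α) - C)) := by
  classical
  have hlogpos : 0 < Real.log (2 * M + 2) := Real.log_pos (by linarith)
  set C : ℝ := Real.sqrt (2 * Real.log (2 * M + 2) / α) with hC_def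
  have hC : 0 < C := Real.sqrt_pos.mpr (by positivity)
  have hC2 : α / 2 * C ^ 2 = Real.log (2 * M + 2) := by
    rw [hC_def, Real.sq_sqrt (by positivity)]
    field_simp
  refine ⟨C, hC, ?_⟩
  intro Λ m _hcount hm1 hI
  intro lam hlam mu hmu hne
  simp only [Function.onFun]
  by_contra hnd
  obtain ⟨x, hxlam, hxmu⟩ := Set.not_disjoint_iff.mp hnd
  obtain ⟨hlamΛ, _hlam2⟩ := hlam
  obtain ⟨hmuΛ, _hmu2⟩ := hmu
  set gx : ℂ → ℂ := fun z => Complex.exp ((α : ℂ) * ((starRingEnd ℂ) x) * z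
      - ((α * ‖x‖ ^ 2 / 2 : ℝ) : ℂ)) with hgx_def
  have hgx_w : ∀ z, ‖gx z‖ * Real.exp (-(α / 2) * ‖z‖ ^ 2)
      = Real.exp (-(α / 2) * ‖z - x‖ ^ 2) := fun z => gx_weight α x z
  have hexp_le_one : ∀ z : ℂ, Real.exp (-(α / 2) * ‖z - x‖ ^ 2) ≤ 1 := by
    intro z
    rw [← Real.exp_zero]
    apply Real.exp_le_exp.mpr
    exact mul_nonpos_of_nonpos_of_nonneg (by linarith) (sq_nonneg _)
  have hgx_mem : MemFInf α gx := by
    constructor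
    · apply Differentiable.cexp
      exact (differentiable_id.const_mul _).sub_const _
    · exact ⟨1, fun z => by rw [hgx_w z]; exact hexp_le_one z⟩
  have hFN_gx : FInfNorm α gx ≤ 1 :=
    FInfNorm_le zero_le_one fun z => by rw [hgx_w z]; exact hexp_le_one z
  set Fdat : ℂ → ℂ → ℂ := fun ν => if ν = lam then gx else (fun _ => 0) with hF_def
  have h1 : ∀ ν ∈ Λ, MemFInf α (Fdat ν) := by
    intro ν _
    by_cases h : ν = lam
    · subst h; simp only [hF_def, if_pos]; exact hgx_mem
    · simp only [hF_def, if_neg h]; exact memFInf_zero α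
  have h2 : ∀ ν ∈ Λ, quotInf α ν (m ν) (Fdat ν) ≤ 1 := by
    intro ν _
    refine le_trans (quotInf_le_norm α ν (m ν) (Fdat ν)) ?_
    by_cases h : ν = lam
    · subst h; simp only [hF_def, if_pos]; exact hFN_gx
    · simp only [hF_def, if_neg h]; rw [FInfNorm_zero]; exact zero_le_one
  obtain ⟨f, hf_mem, hf_N, hf_norm⟩ := hI Fdat h1 1 h2
  rw [mul_one] at hf_norm
  have hf_w : ∀ z, ‖f z‖ * Real.exp (-(α / 2) * ‖z‖ ^ 2) ≤ M :=
    fun z => le_trans (le_FInfNorm hf_mem z) hf_norm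
  have hNmu := hf_N mu hmuΛ
  have hFmu : Fdat mu = (fun _ => (0 : ℂ)) := by
    simp only [hF_def, if_neg (Ne.symm hne)]
  have hvmu : ∀ k < m mu, iteratedDeriv k f mu = 0 := by
    intro k hk
    have h := hNmu.2 k hk
    rw [hFmu] at h
    simpa [sub_zero] using h
  have hNlam := hf_N lam hlamΛ
  have hFlam : Fdat lam = gx := by simp only [hF_def, if_pos]
  have hvlam : ∀ k < m lam, iteratedDeriv k (fun z => f z - gx z) lam = 0 := by
    intro k hk
    have h := hNlam.2 k hk
    rw [hFlam] at h
    exact h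
  have hxl : ‖x - lam‖ < Real.sqrt ((m lam : ℝ) / α) - C := by
    have h := mem_ball.mp hxlam
    rwa [Complex.dist_eq] at h
  have hxm : ‖x - mu‖ < Real.sqrt ((m mu : ℝ) / α) - C := by
    have h := mem_ball.mp hxmu
    rwa [Complex.dist_eq] at h
  have hsup1 := fock_suppress hα hf_mem.1 hM.le hf_w (hm1 mu hmuΛ) hvmu
    (x := x) (le_of_lt (lt_of_lt_of_le hxm (by linarith)))
  have hfg_w : ∀ z, ‖f z - gx z‖
      * Real.exp (-(α / 2) * ‖z‖ ^ 2) ≤ M + 1 := by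
    intro z
    have htri : ‖f z - gx z‖ ≤ ‖f z‖ + ‖gx z‖ :=
      norm_sub_le (f z) (gx z)
    calc ‖f z - gx z‖ * Real.exp (-(α / 2) * ‖z‖ ^ 2)
        ≤ (‖f z‖ + ‖gx z‖)
          * Real.exp (-(α / 2) * ‖z‖ ^ 2) :=
          mul_le_mul_of_nonneg_right htri (Real.exp_pos _).le
      _ = ‖f z‖ * Real.exp (-(α / 2) * ‖z‖ ^ 2)
          + ‖gx z‖ * Real.exp (-(α / 2) * ‖z‖ ^ 2) := by ring
      _ ≤ M + 1 := by
          have h3 := hgx_w z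
          have h4 := hexp_le_one z
          have h5 := hf_w z
          rw [h3] at *
          linarith [hf_w z, h4]
  have hsup2 := fock_suppress hα (hf_mem.1.sub hgx_mem.1)
    (by linarith : (0 : ℝ) ≤ M + 1) hfg_w (hm1 lam hlamΛ) hvlam
    (x := x) (le_of_lt (lt_of_lt_of_le hxl (by linarith)))
  have hid : ‖gx x‖ * Real.exp (-(α / 2) * ‖x‖ ^ 2) = 1 := by
    rw [hgx_w x]
    simp
  have htri : ‖gx x‖ ≤ ‖f x‖ + ‖f x - gx x‖ := by
    have h : gx x = f x - (f x - gx x) := by ring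
    calc ‖gx x‖ = ‖f x - (f x - gx x)‖ := congrArg norm h
      _ ≤ ‖f x‖ + ‖f x - gx x‖ := norm_sub_le _ _
  have hE1 : Real.exp (-(α / 2) * (Real.sqrt ((m mu : ℝ) / α) - ‖x - mu‖) ^ 2)
      ≤ Real.exp (-(α / 2) * C ^ 2) := by
    apply Real.exp_le_exp.mpr
    have h9 : C ≤ Real.sqrt ((m mu : ℝ) / α) - ‖x - mu‖ := by linarith
    nlinarith [pow_le_pow_left₀ hC.le h9 2, hα]
  have hE2 : Real.exp (-(α / 2) * (Real.sqrt ((m lam : ℝ) / α) - ‖x - lam‖) ^ 2)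
      ≤ Real.exp (-(α / 2) * C ^ 2) := by
    apply Real.exp_le_exp.mpr
    have h9 : C ≤ Real.sqrt ((m lam : ℝ) / α) - ‖x - lam‖ := by linarith
    nlinarith [pow_le_pow_left₀ hC.le h9 2, hα]
  have hEC : Real.exp (-(α / 2) * C ^ 2) = (2 * M + 2)⁻¹ := by
    rw [show -(α / 2) * C ^ 2 = -(α / 2 * C ^ 2) by ring, hC2, Real.exp_neg,
      Real.exp_log (by linarith : (0 : ℝ) < 2 * M + 2)]
  have hfinal : (1 : ℝ) ≤ M * (2 * M + 2)⁻¹ + (M + 1) * (2 * M + 2)⁻¹ := by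
    have step1 : (1 : ℝ) ≤ ‖f x‖ * Real.exp (-(α / 2) * ‖x‖ ^ 2)
        + ‖f x - gx x‖ * Real.exp (-(α / 2) * ‖x‖ ^ 2) := by
      have h := mul_le_mul_of_nonneg_right htri (Real.exp_pos
        (-(α / 2) * ‖x‖ ^ 2)).le
      rw [add_mul] at h
      linarith [hid.symm.le.trans h]
    have step2 : ‖f x‖ * Real.exp (-(α / 2) * ‖x‖ ^ 2)
        ≤ M * (2 * M + 2)⁻¹ := by
      rw [← hEC]
      exact le_trans hsup1 (mul_le_mul_of_nonneg_left hE1 hM.le)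
    have step3 : ‖f x - gx x‖ * Real.exp (-(α / 2) * ‖x‖ ^ 2)
        ≤ (M + 1) * (2 * M + 2)⁻¹ := by
      rw [← hEC]
      exact le_trans hsup2 (mul_le_mul_of_nonneg_left hE2 (by linarith))
    linarith
  have hlt : M * (2 * M + 2)⁻¹ + (M + 1) * (2 * M + 2)⁻¹ < 1 := by
    have h2M : (0 : ℝ) < 2 * M + 2 := by linarith
    rw [← add_mul, ← div_eq_mul_inv]
    exact (div_lt_one h2M).mpr (by linarith)
  linarith

end
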